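/- Let f be an odd positive integer, χ a Dirichlet character modulo f, m ≥ 0 and n ≥ 1 integers, and q real with 0 < q < 1. With E_{m,χ,q}(x) = (2/(1-q)^m) Σ_{l=0}^m C(m,l)(-1)^l q^{lx} Σ_{a=0}^{f-1} χ(a)(-1)^a q^{la}/(1+q^{lf}) and E_{m,χ,q} = E_{m,χ,q}(0), one has E_{m,χ,q}(nf) - (-1)^n E_{m,χ,q} = 2 Σ_{l=0}^{nf-1} (-1)^{n-1-l} χ(l) [l]_q^m. -/

import Mathlib

open Finset

/-- The `q`-analogue `[y]_q = (1 - q^y)/(1 - q)` (real power). -/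
noncomputable def qnum (q y : ℝ) : ℝ := (1 - q ^ y) / (1 - q)

/-- The generalized `q`-Euler polynomial attached to a Dirichlet character `χ` mod `f`:
`E_{m,χ,q}(x) = (2/(1-q)^m) Σ_{l=0}^m C(m,l)(-1)^l q^{lx} Σ_{a=0}^{f-1} χ(a)(-1)^a q^{la}/(1+q^{lf})`. -/
noncomputable def qEulerChi (f : ℕ) (χ : DirichletCharacter ℂ f) (m : ℕ) (q x : ℝ) : ℂ :=
  2 / ((1 : ℂ) - (q : ℂ)) ^ m *
    ∑ l ∈ range (m + 1), (m.choose l : ℂ) * (-1) ^ l * ((q ^ ((l : ℝ) * x) : ℝ) : ℂ) *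
      ∑ a ∈ range f, χ (a : ZMod f) * (-1) ^ a * (q : ℂ) ^ (l * a) /
        (((1 + q ^ (l * f) : ℝ)) : ℂ)

private lemma sum_range_mul_decomp {M : Type*} [AddCommMonoid M] (g : ℕ → M) (n f : ℕ) :
    ∑ k ∈ range (n * f), g k = ∑ j ∈ range n, ∑ a ∈ range f, g (j * f + a) := by
  induction n with
  | zero => simp
  | succ n ih =>
    rw [add_one_mul, Finset.sum_range_add, ih, Finset.sum_range_succ]

private lemma sum_comm3 {M : Type*} [AddCommMonoid M] (s1 s2 s3 : Finset ℕ)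
    (g : ℕ → ℕ → ℕ → M) :
    ∑ l ∈ s1, ∑ j ∈ s2, ∑ a ∈ s3, g l j a = ∑ j ∈ s2, ∑ a ∈ s3, ∑ l ∈ s1, g l j a := by
  rw [Finset.sum_comm]
  exact Finset.sum_congr rfl fun j _ => Finset.sum_comm

set_option maxRecDepth 8000 in
private lemma geo_aux (y : ℂ) (n : ℕ) :
    y ^ n - (-1) ^ n = (-(-1 : ℂ) ^ n * ∑ j ∈ range n, (-1) ^ j * y ^ j) * (1 + y) := by
  have h : (∑ j ∈ range n, (-1:ℂ) ^ j * y ^ j) * (-y - 1) = (-1) ^ n * y ^ n - 1 := by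
    have h0 := geom_sum_mul (-y) n
    rw [show (∑ i ∈ range n, (-y) ^ i) = ∑ j ∈ range n, (-1:ℂ) ^ j * y ^ j from
      Finset.sum_congr rfl fun j _ => neg_pow y j, neg_pow y n] at h0
    exact h0
  have h2 : ((-1 : ℂ) ^ n) * ((-1 : ℂ) ^ n) = 1 := by
    rw [← mul_pow]; norm_num
  linear_combination (-(-1 : ℂ) ^ n) * h - y ^ n * h2

theorem stmt_3 (f : ℕ) (hf : 0 < f) (hfodd : Odd f) (χ : DirichletCharacter ℂ f)
    (m n : ℕ) (hn : 1 ≤ n) (q : ℝ) (hq0 : 0 < q) (hq1 : q < 1) :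
    qEulerChi f χ m q ((n * f : ℕ) : ℝ) - (-1) ^ n * qEulerChi f χ m q 0 =
      2 * ∑ l ∈ range (n * f),
        (-1 : ℂ) ^ ((n : ℤ) - 1 - (l : ℤ)) * χ (l : ZMod f) * ((qnum q l ^ m : ℝ) : ℂ) := by
  have hD : ∀ k : ℕ, ((1 + q ^ k : ℝ) : ℂ) ≠ 0 := fun k => by
    exact_mod_cast (by positivity : (0:ℝ) < 1 + q ^ k).ne'
  have hbin : ∀ k : ℕ, ((1:ℂ) - (q:ℂ) ^ k) ^ m
      = ∑ l ∈ range (m+1), (m.choose l : ℂ) * (-1) ^ l * (q:ℂ) ^ (k * l) := by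
    intro k
    rw [sub_eq_add_neg, add_comm, add_pow]
    refine Finset.sum_congr rfl fun l _ => ?_
    rw [neg_pow, one_pow, mul_one, ← pow_mul]
    ring
  have hsgn : ∀ k : ℕ, (-1:ℂ) ^ ((n : ℤ) - 1 - (k : ℤ)) = -(-1:ℂ) ^ n * (-1) ^ k := by
    intro k
    have hne : (-1:ℂ) ≠ 0 := by norm_num
    have hk : ((-1:ℂ) ^ k)⁻¹ = (-1:ℂ) ^ k := by
      rw [← inv_pow, inv_neg, inv_one]
    rw [zpow_sub₀ hne, zpow_sub₀ hne, zpow_natCast, zpow_natCast, zpow_one,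
      div_eq_mul_inv, div_eq_mul_inv, hk, inv_neg, inv_one]
    ring
  have hqn : ∀ k : ℕ, ((qnum q (k : ℝ) ^ m : ℝ) : ℂ)
      = ((1:ℂ) - (q:ℂ) ^ k) ^ m / ((1:ℂ) - (q:ℂ)) ^ m := by
    intro k
    unfold qnum
    rw [Real.rpow_natCast]
    push_cast
    rw [div_pow]
  -- the common triple-sum form
  have hA : qEulerChi f χ m q ((n * f : ℕ) : ℝ) - (-1) ^ n * qEulerChi f χ m q 0
      = 2 / ((1:ℂ) - (q:ℂ)) ^ m * ∑ l ∈ range (m+1), ∑ j ∈ range n, ∑ a ∈ range f,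
          (m.choose l : ℂ) * (-1) ^ l * (-(-1:ℂ) ^ n) * ((-1) ^ j * (q:ℂ) ^ (l * f * j)) *
            (χ (a : ZMod f) * (-1) ^ a * (q:ℂ) ^ (l * a)) := by
    unfold qEulerChi
    have hfold : ∀ S1 S0 : ℂ, 2 / ((1:ℂ) - (q:ℂ)) ^ m * S1
        - (-1:ℂ) ^ n * (2 / ((1:ℂ) - (q:ℂ)) ^ m * S0)
        = 2 / ((1:ℂ) - (q:ℂ)) ^ m * (S1 - (-1:ℂ) ^ n * S0) := fun S1 S0 => by ring
    rw [hfold]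
    congr 1
    rw [Finset.mul_sum, ← Finset.sum_sub_distrib]
    refine Finset.sum_congr rfl fun l _ => ?_
    have hx : ((q ^ ((l : ℝ) * ((n * f : ℕ) : ℝ)) : ℝ) : ℂ) = (q:ℂ) ^ (l * (n * f)) := by
      rw [show (l : ℝ) * ((n * f : ℕ) : ℝ) = ((l * (n * f) : ℕ) : ℝ) by push_cast; ring,
        Real.rpow_natCast]
      push_cast
      ring
    have h0 : ((q ^ ((l : ℝ) * (0:ℝ)) : ℝ) : ℂ) = 1 := by
      rw [mul_zero, Real.rpow_zero]; norm_num
    rw [hx, h0, ← Finset.sum_div]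
    have hDc : (((1 + q ^ (l * f) : ℝ)) : ℂ) = 1 + (q:ℂ) ^ (l * f) := by push_cast; ring
    rw [hDc]
    have hD' : (1:ℂ) + (q:ℂ) ^ (l * f) ≠ 0 := by rw [← hDc]; exact hD (l * f)
    have key : (q:ℂ) ^ (l * (n * f)) - (-1:ℂ) ^ n
        = (-(-1:ℂ) ^ n * ∑ j ∈ range n, (-1:ℂ) ^ j * (q:ℂ) ^ (l * f * j)) *
            (1 + (q:ℂ) ^ (l * f)) := by
      have h := geo_aux ((q:ℂ) ^ (l * f)) n
      simp only [← pow_mul] at h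
      rwa [show l * f * n = l * (n * f) by ring] at h
    have hR := Finset.sum_mul_sum (range n) (range f)
      (fun j => (m.choose l : ℂ) * (-1) ^ l * (-(-1:ℂ) ^ n) * ((-1) ^ j * (q:ℂ) ^ (l * f * j)))
      (fun a => χ (a : ZMod f) * (-1) ^ a * (q:ℂ) ^ (l * a))
    rw [← hR]
    have hf2 : (∑ j ∈ range n,
        (m.choose l : ℂ) * (-1) ^ l * (-(-1:ℂ) ^ n) * ((-1) ^ j * (q:ℂ) ^ (l * f * j)))
        = (m.choose l : ℂ) * (-1) ^ l * (-(-1:ℂ) ^ n) *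
            ∑ j ∈ range n, (-1:ℂ) ^ j * (q:ℂ) ^ (l * f * j) := by
      rw [Finset.mul_sum]
    rw [hf2]
    have gen : ∀ c e x Sa D : ℂ, c * x * (Sa / D) - e * (c * 1 * (Sa / D))
        = c * ((x - e) * Sa) / D := by intros; ring
    have gen2 : ∀ c E Sa D : ℂ, D ≠ 0 → c * ((E * D) * Sa) / D = c * E * Sa := by
      intros c E Sa D hD0; field_simp
    rw [gen, key, gen2 _ _ _ _ hD']
    ring
  have hB : (2 : ℂ) * ∑ k ∈ range (n * f),
        (-1 : ℂ) ^ ((n : ℤ) - 1 - (k : ℤ)) * χ (k : ZMod f) * ((qnum q k ^ m : ℝ) : ℂ)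
      = 2 / ((1:ℂ) - (q:ℂ)) ^ m * ∑ l ∈ range (m+1), ∑ j ∈ range n, ∑ a ∈ range f,
          (m.choose l : ℂ) * (-1) ^ l * (-(-1:ℂ) ^ n) * ((-1) ^ j * (q:ℂ) ^ (l * f * j)) *
            (χ (a : ZMod f) * (-1) ^ a * (q:ℂ) ^ (l * a)) := by
    rw [sum_range_mul_decomp, sum_comm3]
    simp only [Finset.mul_sum]
    refine Finset.sum_congr rfl fun j _ => Finset.sum_congr rfl fun a _ => ?_
    rw [hsgn, hqn, hbin,
      show ((j * f + a : ℕ) : ZMod f) = (a : ZMod f) by push_cast [ZMod.natCast_self]; ring]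
    simp only [Finset.sum_div, Finset.mul_sum]
    refine Finset.sum_congr rfl fun l _ => ?_
    rw [show (j * f + a) * l = l * f * j + l * a by ring,
      pow_add (q:ℂ) (l * f * j) (l * a),
      show ((-1:ℂ)) ^ (j * f + a) = (-1) ^ j * (-1) ^ a by
        rw [pow_add, mul_comm j f, pow_mul, hfodd.neg_one_pow]]
    ring
  rw [hA, hB]
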